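/- Consider a run of the PRM protocol on n ≥ 1 agents with any input color assignment χ : Fin n → Fin k and any interaction schedule σ : ℕ → Fin n × Fin n pairing distinct agents. Then the bra-kets eventually stop changing: there exists a time T such that for all t ≥ T and all agents a, the bra-ket of agent a at time t equals its bra-ket at time T. -/

import Mathlib

/-- The state of an agent in the PRM protocol: a bra-ket `(bra, ket)` together
with an output value `out`, all colors in `Fin k`. -/
structure AgentState (k : ℕ) where
  bra : Fin k
  ket : Fin k
  out : Fin k

/-- The weight of a bra-ket `(i, j)`: `k` if `i = j`, and `(j - i) mod k` otherwise. -/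
def wt (k : ℕ) (i j : Fin k) : ℕ :=
  if i = j then k else (((j : ℤ) - (i : ℤ)) % (k : ℤ)).toNat

lemma wt_pos {k : ℕ} (hk : 1 ≤ k) (i j : Fin k) : 1 ≤ wt k i j := by
  unfold wt
  split_ifs with h
  · exact hk
  · have hk' : (0:ℤ) < k := by exact_mod_cast hk
    have h1 : 0 ≤ ((j:ℤ) - i) % k := Int.emod_nonneg _ (by omega)
    have h2 : ((j:ℤ) - i) % k ≠ 0 := by
      intro h0
      obtain ⟨c, hc⟩ := Int.dvd_of_emod_eq_zero h0
      have hj : (j:ℤ) < k := by exact_mod_cast j.isLt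
      have hi : (i:ℤ) < k := by exact_mod_cast i.isLt
      have hj0 : 0 ≤ (j:ℤ) := by positivity
      have hi0 : 0 ≤ (i:ℤ) := by positivity
      have hc1 : c < 1 := by
        have : (k:ℤ) * c < k * 1 := by linarith
        exact lt_of_mul_lt_mul_left this (le_of_lt hk')
      have hc2 : -1 < c := by
        have : (k:ℤ) * (-1) < k * c := by linarith
        exact lt_of_mul_lt_mul_left this (le_of_lt hk')
      have : c = 0 := by omega
      rw [this, mul_zero] at hc
      exact h (Fin.ext (by omega))
    omega

lemma wt_le {k : ℕ} (i j : Fin k) : wt k i j ≤ k := by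
  unfold wt
  split_ifs with h
  · exact le_refl _
  · have hk' : (0:ℤ) < k := by
      have := i.pos
      exact_mod_cast this
    have := Int.emod_lt_of_pos ((j:ℤ) - i) hk'
    omega

lemma wt_mod {k : ℕ} (hk : 1 ≤ k) (i j : Fin k) :
    ((wt k i j : ℤ)) % k = ((j:ℤ) - i) % k := by
  unfold wt
  split_ifs with h
  · subst h; simp
  · have hk' : (0:ℤ) < k := by exact_mod_cast hk
    rw [Int.toNat_of_nonneg (Int.emod_nonneg _ (by omega)), Int.emod_emod_of_dvd _ dvd_rfl]

lemma wt_conserve {k : ℕ} (hk : 1 ≤ k) (i j i' j' : Fin k) :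
    (k:ℤ) ∣ (((wt k i j : ℤ) + wt k i' j') - ((wt k i j' : ℤ) + wt k i' j)) := by
  have m1 : (wt k i j : ℤ) ≡ (j:ℤ) - i [ZMOD k] := wt_mod hk i j
  have m2 : (wt k i' j' : ℤ) ≡ (j':ℤ) - i' [ZMOD k] := wt_mod hk i' j'
  have m3 : (wt k i j' : ℤ) ≡ (j':ℤ) - i [ZMOD k] := wt_mod hk i j'
  have m4 : (wt k i' j : ℤ) ≡ (j:ℤ) - i' [ZMOD k] := wt_mod hk i' j
  have h12 := m1.add m2
  have h34 := m3.add m4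
  have heq : ((j:ℤ) - i) + ((j':ℤ) - i') = ((j':ℤ) - i) + ((j:ℤ) - i') := by ring
  rw [heq] at h12
  have hdv := (h12.sub h34).dvd
  have h' : (k:ℤ) ∣ -((((wt k i j : ℤ) + wt k i' j') - ((wt k i j' : ℤ) + wt k i' j))) := by
    convert hdv using 1; ring
  exact dvd_neg.mp h'

lemma key' (k a b a' b' : ℤ) (hk : 1 ≤ k)
    (ha1 : 1 ≤ a) (hak : a ≤ k) (hb1 : 1 ≤ b) (hbk : b ≤ k)
    (ha'1 : 1 ≤ a') (ha'k : a' ≤ k) (hb'1 : 1 ≤ b') (hb'k : b' ≤ k)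
    (hd : (k:ℤ) ∣ (a + b) - (a' + b'))
    (h1 : a' < a) (h2 : a' < b) (h3 : a' ≤ b') :
    a'*(2*k^2+1) - a'^2 + (b'*(2*k^2+1) - b'^2) <
      a*(2*k^2+1) - a^2 + (b*(2*k^2+1) - b^2) := by
  obtain ⟨c, hc⟩ := hd
  have hc1 : c < 2 := by
    have : (k:ℤ) * c < k * 2 := by linarith
    exact lt_of_mul_lt_mul_left this (by linarith)
  have hc2 : -1 < c := by
    have : (k:ℤ) * (-1) < k * c := by linarith
    exact lt_of_mul_lt_mul_left this (by linarith)
  interval_cases c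
  · have hsum : a + b = a' + b' := by linarith
    nlinarith [mul_pos (by linarith : (0:ℤ) < a - a') (by linarith : (0:ℤ) < b - a')]
  · have hsum : a + b = a' + b' + k := by linarith
    nlinarith [sq_nonneg a', sq_nonneg b', mul_le_mul hak hak (by linarith) (by linarith),
      mul_le_mul hbk hbk (by linarith) (by linarith),
      mul_pos (by linarith : (0:ℤ) < k) (by nlinarith : (0:ℤ) < 2*k^2 - 2*k + 1)]

lemma key (k a b a' b' : ℤ) (hk : 1 ≤ k)
    (ha1 : 1 ≤ a) (hak : a ≤ k) (hb1 : 1 ≤ b) (hbk : b ≤ k)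
    (ha'1 : 1 ≤ a') (ha'k : a' ≤ k) (hb'1 : 1 ≤ b') (hb'k : b' ≤ k)
    (hd : (k:ℤ) ∣ (a + b) - (a' + b'))
    (hmin : min a' b' < min a b) :
    a'*(2*k^2+1) - a'^2 + (b'*(2*k^2+1) - b'^2) <
      a*(2*k^2+1) - a^2 + (b*(2*k^2+1) - b^2) := by
  rcases le_total a' b' with h | h
  · rw [min_eq_left h] at hmin
    exact key' k a b a' b' hk ha1 hak hb1 hbk ha'1 ha'k hb'1 hb'k hd
      (lt_of_lt_of_le hmin (min_le_left _ _)) (lt_of_lt_of_le hmin (min_le_right _ _)) h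
  · rw [min_eq_right h] at hmin
    have := key' k a b b' a' hk ha1 hak hb1 hbk hb'1 hb'k ha'1 ha'k (by
      have : (a + b) - (b' + a') = (a + b) - (a' + b') := by ring
      rw [this]; exact hd)
      (lt_of_lt_of_le hmin (min_le_left _ _)) (lt_of_lt_of_le hmin (min_le_right _ _)) h
    linarith
/-- One interaction of the PRM protocol between two agents: they exchange their
kets if this strictly decreases the minimum weight of their two bra-kets; then,
if either agent has a bra-ket of the form `(i, i)`, both set their out value to `i`. -/
def interact {k : ℕ} (s t : AgentState k) : AgentState k × AgentState k :=
  let s1 : AgentState k :=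
    if min (wt k s.bra t.ket) (wt k t.bra s.ket) < min (wt k s.bra s.ket) (wt k t.bra t.ket)
      then ⟨s.bra, t.ket, s.out⟩ else s
  let t1 : AgentState k :=
    if min (wt k s.bra t.ket) (wt k t.bra s.ket) < min (wt k s.bra s.ket) (wt k t.bra t.ket)
      then ⟨t.bra, s.ket, t.out⟩ else t
  if s1.bra = s1.ket then (⟨s1.bra, s1.ket, s1.bra⟩, ⟨t1.bra, t1.ket, s1.bra⟩)
  else if t1.bra = t1.ket then (⟨s1.bra, s1.ket, t1.bra⟩, ⟨t1.bra, t1.ket, t1.bra⟩)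
  else (s1, t1)

/-- The run of the PRM protocol on `n` agents with input colors `χ` under
schedule `σ`: `run χ σ t a` is the state of agent `a` at time `t`. -/
def run {k n : ℕ} (χ : Fin n → Fin k) (σ : ℕ → Fin n × Fin n) :
    ℕ → Fin n → AgentState k
  | 0 => fun a => ⟨χ a, χ a, χ a⟩
  | t + 1 => fun a =>
    let st := run χ σ t
    let p := (σ t).1
    let q := (σ t).2
    if a = p then (interact (st p) (st q)).1
    else if a = q then (interact (st p) (st q)).2
    else st a

/-- The swap condition for an interaction. -/
def swapC {k : ℕ} (s t : AgentState k) : Prop :=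
  min (wt k s.bra t.ket) (wt k t.bra s.ket) < min (wt k s.bra s.ket) (wt k t.bra t.ket)

instance {k : ℕ} (s t : AgentState k) : Decidable (swapC s t) := by
  unfold swapC; infer_instance

lemma interact_spec {k : ℕ} (s t : AgentState k) :
    (interact s t).1.bra = s.bra ∧ (interact s t).2.bra = t.bra ∧
    (interact s t).1.ket = (if swapC s t then t.ket else s.ket) ∧
    (interact s t).2.ket = (if swapC s t then s.ket else t.ket) := by
  by_cases h : swapC s t
  · simp only [interact, swapC] at *
    simp only [h, if_true]
    split_ifs <;> simp
  · simp only [interact, swapC] at *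
    simp only [h, if_false]
    split_ifs <;> simp

/-- Per-agent potential. -/
def phi (k w : ℕ) : ℕ := w * (2*k*k+1) - w*w

/-- Global potential. -/
def Phi {k n : ℕ} (χ : Fin n → Fin k) (σ : ℕ → Fin n × Fin n) (t : ℕ) : ℕ :=
  ∑ a : Fin n, phi k (wt k (run χ σ t a).bra (run χ σ t a).ket)

lemma phi_cast {k w : ℕ} (hw : w ≤ k) :
    (phi k w : ℤ) = (w:ℤ) * (2*(k:ℤ)^2+1) - (w:ℤ)^2 := by
  unfold phi
  have hk2 : k ≤ 2*k*k+1 := by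
    rcases Nat.eq_zero_or_pos k with h0 | h0
    · simp [h0]
    · have h1 : k*1 ≤ k*k := Nat.mul_le_mul_left k h0
      have h2 : k*k ≤ 2*(k*k) := Nat.le_mul_of_pos_left _ (by norm_num)
      calc k = k*1 := (mul_one k).symm
        _ ≤ k*k := h1
        _ ≤ 2*(k*k) := h2
        _ = 2*k*k := (mul_assoc 2 k k).symm
        _ ≤ 2*k*k+1 := Nat.le_succ _
  have h : w*w ≤ w * (2*k*k+1) := Nat.mul_le_mul_left w (le_trans hw hk2)
  push_cast [h]
  ring

lemma phi_key {k : ℕ} (hk : 1 ≤ k) (i j i' j' : Fin k)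
    (hmin : min (wt k i j') (wt k i' j) < min (wt k i j) (wt k i' j')) :
    phi k (wt k i j') + phi k (wt k i' j) < phi k (wt k i j) + phi k (wt k i' j') := by
  have h := key (k:ℤ) (wt k i j) (wt k i' j') (wt k i j') (wt k i' j)
    (by exact_mod_cast hk)
    (by exact_mod_cast wt_pos hk i j) (by exact_mod_cast wt_le i j)
    (by exact_mod_cast wt_pos hk i' j') (by exact_mod_cast wt_le i' j')
    (by exact_mod_cast wt_pos hk i j') (by exact_mod_cast wt_le i j')
    (by exact_mod_cast wt_pos hk i' j) (by exact_mod_cast wt_le i' j)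
    (wt_conserve hk i j i' j')
    (by
      have := hmin
      rw [← Nat.cast_min, ← Nat.cast_min] ; exact_mod_cast this)
  have e1 := phi_cast (k := k) (wt_le i j)
  have e2 := phi_cast (k := k) (wt_le i' j')
  have e3 := phi_cast (k := k) (wt_le i j')
  have e4 := phi_cast (k := k) (wt_le i' j)
  have : (phi k (wt k i j') : ℤ) + phi k (wt k i' j) <
      (phi k (wt k i j) : ℤ) + phi k (wt k i' j') := by
    rw [e1, e2, e3, e4]; linarith
  exact_mod_cast this

lemma run_bra {k n : ℕ} (χ : Fin n → Fin k) (σ : ℕ → Fin n × Fin n) :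
    ∀ t a, (run χ σ t a).bra = χ a := by
  intro t
  induction t with
  | zero => intro a; rfl
  | succ t ih =>
    intro a
    have hs := interact_spec (run χ σ t (σ t).1) (run χ σ t (σ t).2)
    show (if a = (σ t).1 then _ else if a = (σ t).2 then _ else run χ σ t a).bra = χ a
    split_ifs with h1 h2
    · rw [hs.1, ih]; rw [h1]
    · rw [hs.2.1, ih]; rw [h2]
    · exact ih a

lemma step {k n : ℕ} (hk : 1 ≤ k) (χ : Fin n → Fin k) (σ : ℕ → Fin n × Fin n)
    (hσ : ∀ t : ℕ, (σ t).1 ≠ (σ t).2) (t : ℕ) :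
    Phi χ σ (t+1) ≤ Phi χ σ t ∧
    (Phi χ σ (t+1) = Phi χ σ t → ∀ a, (run χ σ (t+1) a).ket = (run χ σ t a).ket) := by
  set p := (σ t).1 with hp
  set q := (σ t).2 with hq
  set st := run χ σ t with hst
  have hpq : p ≠ q := hσ t
  have hrun : ∀ a, run χ σ (t+1) a =
      if a = p then (interact (st p) (st q)).1
      else if a = q then (interact (st p) (st q)).2
      else st a := fun a => rfl
  have hspec := interact_spec (st p) (st q)
  by_cases hC : swapC (st p) (st q)
  · -- strict decrease of Phi
    have hketp : (run χ σ (t+1) p).ket = (st q).ket := by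
      rw [hrun p, if_pos rfl, hspec.2.2.1, if_pos hC]
    have hketq : (run χ σ (t+1) q).ket = (st p).ket := by
      rw [hrun q, if_neg (Ne.symm hpq), if_pos rfl, hspec.2.2.2, if_pos hC]
    have hbrap : (run χ σ (t+1) p).bra = (st p).bra := by
      rw [hrun p, if_pos rfl, hspec.1]
    have hbraq : (run χ σ (t+1) q).bra = (st q).bra := by
      rw [hrun q, if_neg (Ne.symm hpq), if_pos rfl, hspec.2.1]
    have hother : ∀ a, a ≠ p → a ≠ q → run χ σ (t+1) a = st a := by
      intro a h1 h2; rw [hrun a, if_neg h1, if_neg h2]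
    have hsplit : ∀ (G : Fin n → ℕ), ∑ a, G a =
        G p + (G q + ∑ a ∈ (Finset.univ.erase p).erase q, G a) := by
      intro G
      rw [Finset.add_sum_erase _ G
        (Finset.mem_erase.mpr ⟨Ne.symm hpq, Finset.mem_univ q⟩),
        Finset.add_sum_erase _ G (Finset.mem_univ p)]
    have hlt : Phi χ σ (t+1) < Phi χ σ t := by
      unfold Phi
      rw [hsplit (fun a => phi k (wt k (run χ σ (t+1) a).bra (run χ σ (t+1) a).ket)),
        hsplit (fun a => phi k (wt k (run χ σ t a).bra (run χ σ t a).ket))]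
      have hrest : ∑ a ∈ (Finset.univ.erase p).erase q,
          phi k (wt k (run χ σ (t+1) a).bra (run χ σ (t+1) a).ket) =
          ∑ a ∈ (Finset.univ.erase p).erase q,
          phi k (wt k (run χ σ t a).bra (run χ σ t a).ket) := by
        apply Finset.sum_congr rfl
        intro a ha
        have h2 : a ≠ q := (Finset.mem_erase.mp ha).1
        have h1 : a ≠ p := (Finset.mem_erase.mp (Finset.mem_erase.mp ha).2).1
        rw [hother a h1 h2]
      rw [hrest]
      have hkey := phi_key hk (st p).bra (st p).ket (st q).bra (st q).ket hC
      have e1 : phi k (wt k (run χ σ (t+1) p).bra (run χ σ (t+1) p).ket)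
          = phi k (wt k (st p).bra (st q).ket) := by rw [hbrap, hketp]
      have e2 : phi k (wt k (run χ σ (t+1) q).bra (run χ σ (t+1) q).ket)
          = phi k (wt k (st q).bra (st p).ket) := by rw [hbraq, hketq]
      rw [e1, e2]
      simp only [← hst]
      omega
    exact ⟨le_of_lt hlt, fun h => absurd h (ne_of_lt hlt)⟩
  · -- nothing changes
    have hsame : ∀ a, (run χ σ (t+1) a).ket = (st a).ket ∧
        (run χ σ (t+1) a).bra = (st a).bra := by
      intro a
      rw [hrun a]
      split_ifs with h1 h2
      · subst h1; exact ⟨by rw [hspec.2.2.1, if_neg hC], hspec.1⟩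
      · subst h2; exact ⟨by rw [hspec.2.2.2, if_neg hC], hspec.2.1⟩
      · exact ⟨rfl, rfl⟩
    have heq : Phi χ σ (t+1) = Phi χ σ t := by
      unfold Phi
      apply Finset.sum_congr rfl
      intro a _
      rw [(hsame a).1, (hsame a).2]
    exact ⟨le_of_eq heq, fun _ a => (hsame a).1⟩

lemma Phi_anti {k n : ℕ} (hk : 1 ≤ k) (χ : Fin n → Fin k) (σ : ℕ → Fin n × Fin n)
    (hσ : ∀ t : ℕ, (σ t).1 ≠ (σ t).2) :
    ∀ s t, s ≤ t → Phi χ σ t ≤ Phi χ σ s := by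
  intro s t hst
  induction t with
  | zero =>
    have : s = 0 := by omega
    subst this; exact le_refl _
  | succ t ih =>
    rcases Nat.lt_or_ge s (t+1) with h | h
    · exact le_trans (step hk χ σ hσ t).1 (ih (by omega))
    · have : s = t + 1 := by omega
      subst this; exact le_refl _

lemma ev_const (N : ℕ) : ∀ f : ℕ → ℕ, f 0 ≤ N → (∀ s t, s ≤ t → f t ≤ f s) →
    ∃ T, ∀ t, T ≤ t → f t = f T := by
  induction N with
  | zero =>
    intro f h0 hf
    refine ⟨0, fun t _ => ?_⟩
    have := hf 0 t (Nat.zero_le t)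
    omega
  | succ N ih =>
    intro f h0 hf
    by_cases h : ∀ t, f t = f 0
    · exact ⟨0, fun t _ => h t⟩
    · push_neg at h
      obtain ⟨t0, ht0⟩ := h
      have hlt : f t0 < f 0 := lt_of_le_of_ne (hf 0 t0 (Nat.zero_le _)) ht0
      obtain ⟨T, hT⟩ := ih (fun t => f (t0 + t)) (by simp; omega)
        (fun s t hst => hf _ _ (by omega))
      refine ⟨t0 + T, fun t ht => ?_⟩
      have := hT (t - t0) (by omega)
      simpa [show t0 + (t - t0) = t from by omega] using this

/-- Theorem (Stabilization): in any run of the PRM protocol, the bra-kets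
eventually stop changing. -/
theorem prm_stabilization {k n : ℕ} (hk : 1 ≤ k) (hn : 1 ≤ n)
    (χ : Fin n → Fin k) (σ : ℕ → Fin n × Fin n)
    (hσ : ∀ t : ℕ, (σ t).1 ≠ (σ t).2) :
    ∃ T : ℕ, ∀ t : ℕ, T ≤ t → ∀ a : Fin n,
      (run χ σ t a).bra = (run χ σ T a).bra ∧
      (run χ σ t a).ket = (run χ σ T a).ket := by
  obtain ⟨T, hT⟩ := ev_const (Phi χ σ 0) (Phi χ σ) (le_refl _) (Phi_anti hk χ σ hσ)
  refine ⟨T, fun t ht => ?_⟩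
  have hket : ∀ a, (run χ σ t a).ket = (run χ σ T a).ket := by
    induction t, ht using Nat.le_induction with
    | base => intro a; rfl
    | succ t ht ih =>
      intro a
      have h1 : Phi χ σ (t+1) = Phi χ σ t := by
        rw [hT (t+1) (by omega), hT t ht]
      rw [(step hk χ σ hσ t).2 h1 a, ih a]
  exact fun a => ⟨by rw [run_bra, run_bra], hket a⟩
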